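/- Suppose n is even. Let M be a matching of maximum weight among all matchings of size n/3 in G, and let N be a matching of maximum weight among all matchings of size n/2 in G. Then w(N) ≥ w(M) − w(M_1) − w(M_2) + w(X_1) + Σ_{xyz ∈ P*_2} max{w(xy), w(yz)} + w(X_3) + w(X_4) + w(X_6). -/

import Mathlib

open Finset
open scoped Classical

namespace MW3PP

/-- A 3-path `xyz`: a path on three distinct vertices with middle vertex `y`. -/
structure P3 (V : Type*) where
  x : V
  y : V
  z : V
  hxy : x ≠ y
  hyz : y ≠ z
  hxz : x ≠ z

variable {V : Type*} [Fintype V] [DecidableEq V]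

/-- The vertex set of a 3-path. -/
def P3.verts (p : P3 V) : Finset V := {p.x, p.y, p.z}

/-- The two edges of a 3-path. -/
def P3.edges (p : P3 V) : Finset (Sym2 V) := {s(p.x, p.y), s(p.y, p.z)}

/-- The weight of a 3-path. -/
def P3.wt (w : Sym2 V → ℝ) (p : P3 V) : ℝ := w s(p.x, p.y) + w s(p.y, p.z)

/-- The total weight of a set of edges. -/
def ew (w : Sym2 V → ℝ) (F : Finset (Sym2 V)) : ℝ := ∑ e ∈ F, w e

/-- The total weight of a set of 3-paths. -/
def pw (w : Sym2 V → ℝ) (P : Finset (P3 V)) : ℝ := ∑ p ∈ P, p.wt w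

/-- `∑_{xyz ∈ S} max (w (xy)) (w (yz))`. -/
def maxSum (w : Sym2 V → ℝ) (S : Finset (P3 V)) : ℝ :=
  ∑ p ∈ S, max (w s(p.x, p.y)) (w s(p.y, p.z))

/-- A perfect 3-path packing: `n/3` pairwise vertex-disjoint 3-paths covering all vertices. -/
def IsPacking (P : Finset (P3 V)) : Prop :=
  P.card = Fintype.card V / 3 ∧
  (∀ p ∈ P, ∀ q ∈ P, p ≠ q → Disjoint p.verts q.verts) ∧
  (∀ v : V, ∃ p ∈ P, v ∈ p.verts)

/-- A maximum-weight perfect 3-path packing. -/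
def IsMaxPacking (w : Sym2 V → ℝ) (P : Finset (P3 V)) : Prop :=
  IsPacking P ∧ ∀ Q : Finset (P3 V), IsPacking Q → pw w Q ≤ pw w P

/-- A matching: a set of pairwise vertex-disjoint (non-loop) edges. -/
def IsMatching (M : Finset (Sym2 V)) : Prop :=
  (∀ e ∈ M, ¬ e.IsDiag) ∧
  ∀ e ∈ M, ∀ f ∈ M, e ≠ f → ∀ v : V, v ∈ e → v ∉ f

/-- A maximum-weight matching among all matchings of size `k`. -/
def IsMaxMatchingOfSize (w : Sym2 V → ℝ) (k : ℕ) (M : Finset (Sym2 V)) : Prop :=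
  IsMatching M ∧ M.card = k ∧
  ∀ M' : Finset (Sym2 V), IsMatching M' → M'.card = k → ew w M' ≤ ew w M

/-- `v ∈ V(M)` : vertex `v` is covered by the matching `M`. -/
def covered (M : Finset (Sym2 V)) (v : V) : Prop := ∃ e ∈ M, v ∈ e

/-- `e_u` : the edge of `M` containing `u` (junk value if there is none). -/
noncomputable def eMatch (M : Finset (Sym2 V)) (u : V) : Sym2 V :=
  if h : ∃ e ∈ M, u ∈ e then h.choose else s(u, u)

/-- The cost `c` of an edge with respect to a matching `M`:
`c(uv) = w(uv) - min (w (e_u)) (w (e_v))` if both endpoints are covered by `M`,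
and `c(uv) = w(uv)` otherwise. -/
noncomputable def cost (w : Sym2 V → ℝ) (M : Finset (Sym2 V)) : Sym2 V → ℝ :=
  Sym2.lift ⟨fun u v =>
    if covered M u ∧ covered M v then
      w s(u, v) - min (w (eMatch M u)) (w (eMatch M v))
    else w s(u, v), by
      intro u v
      dsimp only
      by_cases h : covered M u ∧ covered M v
      · rw [if_pos h, if_pos (show covered M v ∧ covered M u from ⟨h.2, h.1⟩),
          Sym2.eq_swap, min_comm]
      · rw [if_neg h, if_neg (show ¬(covered M v ∧ covered M u) from fun h' => h ⟨h'.2, h'.1⟩),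
          Sym2.eq_swap]⟩

/-- The total cost of a set of edges. -/
noncomputable def cw (w : Sym2 V → ℝ) (M F : Finset (Sym2 V)) : ℝ := ∑ e ∈ F, cost w M e

/-- The number of vertices of the 3-path `p` covered by `M`. -/
noncomputable def kcnt (M : Finset (Sym2 V)) (p : P3 V) : ℕ :=
  (p.verts.filter fun v => covered M v).card

/-- Exactly one of the two edges of `p` lies in `M`. -/
def exOne (M : Finset (Sym2 V)) (p : P3 V) : Prop :=
  (s(p.x, p.y) ∈ M ∧ s(p.y, p.z) ∉ M) ∨ (s(p.x, p.y) ∉ M ∧ s(p.y, p.z) ∈ M)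

def cls1 (M : Finset (Sym2 V)) (p : P3 V) : Prop := kcnt M p = 0
def cls2 (M : Finset (Sym2 V)) (p : P3 V) : Prop := kcnt M p = 1 ∧ ¬ covered M p.y
def cls3 (M : Finset (Sym2 V)) (p : P3 V) : Prop := kcnt M p = 1 ∧ covered M p.y
def cls4 (M : Finset (Sym2 V)) (p : P3 V) : Prop := kcnt M p = 2 ∧ ¬ covered M p.y
def cls5 (M : Finset (Sym2 V)) (p : P3 V) : Prop := kcnt M p = 2 ∧ covered M p.y ∧ exOne M p
def cls6 (M : Finset (Sym2 V)) (p : P3 V) : Prop :=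
  kcnt M p = 2 ∧ covered M p.y ∧ s(p.x, p.y) ∉ M ∧ s(p.y, p.z) ∉ M
def cls7 (M : Finset (Sym2 V)) (p : P3 V) : Prop := kcnt M p = 3 ∧ exOne M p
def cls8 (M : Finset (Sym2 V)) (p : P3 V) : Prop :=
  kcnt M p = 3 ∧ s(p.x, p.y) ∉ M ∧ s(p.y, p.z) ∉ M

/-- The subset of a set of 3-paths satisfying a predicate. -/
noncomputable def psel (P : Finset (P3 V)) (c : P3 V → Prop) : Finset (P3 V) := P.filter c

/-- The set of all edges of the 3-paths in `S`. -/
def Esub (S : Finset (P3 V)) : Finset (Sym2 V) := S.biUnion P3.edges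

/-- The heaviest edge of a 3-path (the edge `xy` in case of a tie). -/
noncomputable def heavy (w : Sym2 V → ℝ) (p : P3 V) : Sym2 V :=
  if w s(p.y, p.z) ≤ w s(p.x, p.y) then s(p.x, p.y) else s(p.y, p.z)

noncomputable def X1 (w : Sym2 V → ℝ) (P : Finset (P3 V)) (M : Finset (Sym2 V)) :
    Finset (Sym2 V) := (psel P (cls1 M)).image (heavy w)
noncomputable def X2 (P : Finset (P3 V)) (M : Finset (Sym2 V)) : Finset (Sym2 V) :=
  (psel P (cls2 M)).image fun p => if covered M p.x then s(p.x, p.y) else s(p.y, p.z)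
noncomputable def X3 (w : Sym2 V → ℝ) (P : Finset (P3 V)) (M : Finset (Sym2 V)) :
    Finset (Sym2 V) := (psel P (cls3 M)).image (heavy w)
noncomputable def X4 (w : Sym2 V → ℝ) (P : Finset (P3 V)) (M : Finset (Sym2 V)) :
    Finset (Sym2 V) := (psel P (cls4 M)).image (heavy w)
noncomputable def X5 (P : Finset (P3 V)) (M : Finset (Sym2 V)) : Finset (Sym2 V) :=
  (psel P (cls5 M)).image fun p => if s(p.x, p.y) ∈ M then s(p.y, p.z) else s(p.x, p.y)
noncomputable def X6 (P : Finset (P3 V)) (M : Finset (Sym2 V)) : Finset (Sym2 V) :=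
  (psel P (cls6 M)).image fun p => if covered M p.x then s(p.y, p.z) else s(p.x, p.y)
noncomputable def X7 (P : Finset (P3 V)) (M : Finset (Sym2 V)) : Finset (Sym2 V) :=
  (psel P (cls7 M)).image fun p => if s(p.x, p.y) ∈ M then s(p.y, p.z) else s(p.x, p.y)
noncomputable def X8 (w : Sym2 V → ℝ) (P : Finset (P3 V)) (M : Finset (Sym2 V)) :
    Finset (Sym2 V) := (psel P (cls8 M)).image (heavy w)

noncomputable def Y1 (w : Sym2 V → ℝ) (P : Finset (P3 V)) (M : Finset (Sym2 V)) :
    Finset (Sym2 V) := Esub (psel P (cls1 M)) \ X1 w P M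
noncomputable def Y2 (P : Finset (P3 V)) (M : Finset (Sym2 V)) : Finset (Sym2 V) :=
  Esub (psel P (cls2 M)) \ X2 P M
noncomputable def Y3 (w : Sym2 V → ℝ) (P : Finset (P3 V)) (M : Finset (Sym2 V)) :
    Finset (Sym2 V) := Esub (psel P (cls3 M)) \ X3 w P M
noncomputable def Y4 (w : Sym2 V → ℝ) (P : Finset (P3 V)) (M : Finset (Sym2 V)) :
    Finset (Sym2 V) := Esub (psel P (cls4 M)) \ X4 w P M
noncomputable def Y5 (P : Finset (P3 V)) (M : Finset (Sym2 V)) : Finset (Sym2 V) :=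
  Esub (psel P (cls5 M)) \ X5 P M
noncomputable def Y6 (P : Finset (P3 V)) (M : Finset (Sym2 V)) : Finset (Sym2 V) :=
  Esub (psel P (cls6 M)) \ X6 P M
noncomputable def Y7 (P : Finset (P3 V)) (M : Finset (Sym2 V)) : Finset (Sym2 V) :=
  Esub (psel P (cls7 M)) \ X7 P M
noncomputable def Y8 (w : Sym2 V → ℝ) (P : Finset (P3 V)) (M : Finset (Sym2 V)) :
    Finset (Sym2 V) := Esub (psel P (cls8 M)) \ X8 w P M

/-- An edge is a middle edge (w.r.t. `M`) if exactly one of its endpoints lies in `V(M)`. -/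
def isMiddle (M : Finset (Sym2 V)) (e : Sym2 V) : Prop :=
  ∃ u v : V, e = s(u, v) ∧ covered M u ∧ ¬ covered M v

/-- Two edges share a vertex. -/
def shares (e f : Sym2 V) : Prop := ∃ v, v ∈ e ∧ v ∈ f

/-- `g` is a middle edge of some 3-path in `S`. -/
def middleIn (M : Finset (Sym2 V)) (S : Finset (P3 V)) (g : Sym2 V) : Prop :=
  (∃ p ∈ S, g ∈ p.edges) ∧ isMiddle M g

/-- The 3-paths of `P` lying in classes 2, 3 or 4. -/
noncomputable def P234 (P : Finset (P3 V)) (M : Finset (Sym2 V)) : Finset (P3 V) :=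
  psel P fun p => cls2 M p ∨ cls3 M p ∨ cls4 M p

/-- `M_1`: edges of `M` sharing a vertex with at least one middle edge of a 3-path of `P*_6`. -/
noncomputable def Mset1 (P : Finset (P3 V)) (M : Finset (Sym2 V)) : Finset (Sym2 V) :=
  M.filter fun f => ∃ g, middleIn M (psel P (cls6 M)) g ∧ shares f g

/-- `M_2`: edges of `M` sharing a vertex with at least one middle edge, all middle edges met
belonging to 3-paths of `P*_2 ∪ P*_3 ∪ P*_4`. -/
noncomputable def Mset2 (P : Finset (P3 V)) (M : Finset (Sym2 V)) : Finset (Sym2 V) :=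
  M.filter fun f =>
    (∃ g, middleIn M P g ∧ shares f g) ∧
    ∀ g, middleIn M P g → shares f g → middleIn M (P234 P M) g

/-- `M_3 = M ∩ E(P*_7)`. -/
noncomputable def Mset3 (P : Finset (P3 V)) (M : Finset (Sym2 V)) : Finset (Sym2 V) :=
  M ∩ Esub (psel P (cls7 M))

/-- `M_4 = M ∩ E(P*_5)`. -/
noncomputable def Mset4 (P : Finset (P3 V)) (M : Finset (Sym2 V)) : Finset (Sym2 V) :=
  M ∩ Esub (psel P (cls5 M))

/-- The middle edges of 3-paths of `P*_6`. -/
noncomputable def mid6 (P : Finset (P3 V)) (M : Finset (Sym2 V)) : Finset (Sym2 V) :=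
  (Esub (psel P (cls6 M))).filter (isMiddle M)

/-- `M'_1`: edges of `M_1` meeting exactly one middle edge of a 3-path of `P*_6` and
no middle edge of a 3-path of `P*_2 ∪ P*_3 ∪ P*_4`. -/
noncomputable def Mset1' (P : Finset (P3 V)) (M : Finset (Sym2 V)) : Finset (Sym2 V) :=
  (Mset1 P M).filter fun f =>
    ((mid6 P M).filter fun g => shares f g).card = 1 ∧
    ∀ g, middleIn M (P234 P M) g → ¬ shares f g

/-- `M''_1`: edges of `M_1` meeting two middle edges of 3-paths of `P*_6`. -/
noncomputable def Mset1'' (P : Finset (P3 V)) (M : Finset (Sym2 V)) : Finset (Sym2 V) :=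
  (Mset1 P M).filter fun f => ((mid6 P M).filter fun g => shares f g).card = 2

/-- `M'''_1`: edges of `M_1` meeting exactly one middle edge of a 3-path of `P*_6` and
at least one middle edge of a 3-path of `P*_2 ∪ P*_3 ∪ P*_4`. -/
noncomputable def Mset1''' (P : Finset (P3 V)) (M : Finset (Sym2 V)) : Finset (Sym2 V) :=
  (Mset1 P M).filter fun f =>
    ((mid6 P M).filter fun g => shares f g).card = 1 ∧
    ∃ g, middleIn M (P234 P M) g ∧ shares f g

/-- Assumption on `P*`: for every 3-path `xyz ∈ P*` with `y ∉ V(M)` and `x, z ∈ V(M)`,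
the vertices `x` and `z` lie in two distinct edges of `M`. -/
def Ass (P : Finset (P3 V)) (M : Finset (Sym2 V)) : Prop :=
  ∀ p ∈ P, ¬ covered M p.y → covered M p.x → covered M p.z →
    ∃ e ∈ M, ∃ f ∈ M, p.x ∈ e ∧ p.z ∈ f ∧ e ≠ f

/-- An admissible edge w.r.t. `M`: either both endpoints are in `V(M)` and lie in two distinct
edges of `M`, or exactly one endpoint is in `V(M)`. -/
def goodEdge (M : Finset (Sym2 V)) (e : Sym2 V) : Prop :=
  (∃ u v : V, e = s(u, v) ∧ covered M u ∧ covered M v ∧ ∀ f ∈ M, ¬(u ∈ f ∧ v ∈ f)) ∨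
  (∃ u v : V, e = s(u, v) ∧ covered M u ∧ ¬ covered M v)


/-! ### Auxiliary lemmas for `statement_8` -/

section Aux8

set_option linter.unusedSectionVars false

variable {M : Finset (Sym2 V)} {P : Finset (P3 V)}

lemma covered_def {v : V} : covered M v ↔ ∃ e ∈ M, v ∈ e := Iff.rfl

lemma isMiddle_def {e : Sym2 V} :
    isMiddle M e ↔ ∃ u v : V, e = s(u, v) ∧ covered M u ∧ ¬ covered M v := Iff.rfl

lemma shares_def {e f : Sym2 V} : shares e f ↔ ∃ v, v ∈ e ∧ v ∈ f := Iff.rfl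

lemma middleIn_def {S : Finset (P3 V)} {g : Sym2 V} :
    middleIn M S g ↔ (∃ p ∈ S, g ∈ p.edges) ∧ isMiddle M g := Iff.rfl

lemma mem_psel {c : P3 V → Prop} {p : P3 V} : p ∈ psel P c ↔ p ∈ P ∧ c p := by
  simp [psel]

lemma matching_unique (hM : IsMatching M) {e f : Sym2 V} (he : e ∈ M) (hf : f ∈ M)
    {v : V} (hv : v ∈ e) (hv' : v ∈ f) : e = f := by
  by_contra h
  exact hM.2 e he f hf h v hv hv'

lemma eMatch_spec {u : V} (h : covered M u) : eMatch M u ∈ M ∧ u ∈ eMatch M u := by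
  have h' : ∃ e ∈ M, u ∈ e := h
  rw [eMatch, dif_pos h']
  exact ⟨h'.choose_spec.1, h'.choose_spec.2⟩

lemma eMatch_eq (hM : IsMatching M) {u : V} {f : Sym2 V} (hf : f ∈ M) (hu : u ∈ f) :
    eMatch M u = f :=
  matching_unique hM (eMatch_spec ⟨f, hf, hu⟩).1 hf (eMatch_spec ⟨f, hf, hu⟩).2 hu

lemma mem_edges_cases {p : P3 V} {e : Sym2 V} (he : e ∈ p.edges) :
    e = s(p.x, p.y) ∨ e = s(p.y, p.z) := by
  simpa [P3.edges] using he

lemma mem_verts_iff {p : P3 V} {v : V} : v ∈ p.verts ↔ v = p.x ∨ v = p.y ∨ v = p.z := by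
  simp [P3.verts]

lemma edge_vert {p : P3 V} {e : Sym2 V} (he : e ∈ p.edges) {v : V} (hv : v ∈ e) :
    v ∈ p.verts := by
  rcases mem_edges_cases he with h | h <;> subst h <;>
    rcases Sym2.mem_iff.1 hv with h | h <;> simp [P3.verts, h]

lemma kcnt_eq (M : Finset (Sym2 V)) (p : P3 V) :
    kcnt M p = (if covered M p.x then 1 else 0) + ((if covered M p.y then 1 else 0) +
      (if covered M p.z then 1 else 0)) := by
  rw [kcnt, Finset.card_filter]
  show ∑ v ∈ ({p.x, p.y, p.z} : Finset V), (if covered M v then 1 else 0) = _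
  rw [Finset.sum_insert (by simp [p.hxy, p.hxz]), Finset.sum_insert (by simp [p.hyz]),
    Finset.sum_singleton]

lemma uncov_of_kcnt0 {p : P3 V} (h : kcnt M p = 0) :
    ¬ covered M p.x ∧ ¬ covered M p.y ∧ ¬ covered M p.z := by
  have hk := kcnt_eq M p
  rw [h] at hk
  by_cases hx : covered M p.x <;> by_cases hy : covered M p.y <;> by_cases hz : covered M p.z <;>
    simp [hx, hy, hz] at hk ⊢

lemma cov_of_kcnt1_y {p : P3 V} (h : kcnt M p = 1) (hy : covered M p.y) :
    ¬ covered M p.x ∧ ¬ covered M p.z := by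
  have hk := kcnt_eq M p
  rw [h] at hk
  by_cases hx : covered M p.x <;> by_cases hz : covered M p.z <;>
    simp [hx, hy, hz] at hk ⊢

lemma kcnt2_noty {p : P3 V} (h : kcnt M p = 2) (hy : ¬ covered M p.y) :
    covered M p.x ∧ covered M p.z := by
  have hk := kcnt_eq M p
  rw [h] at hk
  by_cases hx : covered M p.x <;> by_cases hz : covered M p.z <;>
    simp [hx, hy, hz] at hk ⊢

lemma kcnt2_y {p : P3 V} (h : kcnt M p = 2) (hy : covered M p.y) :
    (covered M p.x ∧ ¬ covered M p.z) ∨ (¬ covered M p.x ∧ covered M p.z) := by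
  have hk := kcnt_eq M p
  rw [h] at hk
  by_cases hx : covered M p.x <;> by_cases hz : covered M p.z <;>
    simp [hx, hy, hz] at hk ⊢

/-- The union of classes 1,2,3,4,6. -/
def Ccls (M : Finset (Sym2 V)) (p : P3 V) : Prop :=
  cls1 M p ∨ cls2 M p ∨ cls3 M p ∨ cls4 M p ∨ cls6 M p

/-- The edge selected from a 3-path: the `X6` edge for class 6, the heavy edge otherwise. -/
noncomputable def sel (w : Sym2 V → ℝ) (M : Finset (Sym2 V)) (p : P3 V) : Sym2 V :=
  if cls6 M p then (if covered M p.x then s(p.y, p.z) else s(p.x, p.y)) else heavy w p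

lemma heavy_mem_edges (w : Sym2 V → ℝ) (p : P3 V) : heavy w p ∈ p.edges := by
  rw [heavy]; split_ifs <;> simp [P3.edges]

lemma y_mem_heavy (w : Sym2 V → ℝ) (p : P3 V) : p.y ∈ heavy w p := by
  rw [heavy]; split_ifs <;> simp

lemma sel_mem_edges (w : Sym2 V → ℝ) (M : Finset (Sym2 V)) (p : P3 V) :
    sel w M p ∈ p.edges := by
  rw [sel]
  split_ifs
  · simp [P3.edges]
  · simp [P3.edges]
  · exact heavy_mem_edges w p

lemma y_mem_sel (w : Sym2 V → ℝ) (M : Finset (Sym2 V)) (p : P3 V) : p.y ∈ sel w M p := by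
  rw [sel]
  split_ifs
  · simp
  · simp
  · exact y_mem_heavy w p

lemma packing_disj (hPk : IsPacking P) {p q : P3 V} (hp : p ∈ P) (hq : q ∈ P) (hne : p ≠ q)
    {v : V} (hvp : v ∈ p.verts) : v ∉ q.verts :=
  fun hvq => Finset.disjoint_left.1 (hPk.2.1 p hp q hq hne) hvp hvq

lemma heavy_w (w : Sym2 V → ℝ) (p : P3 V) :
    w (heavy w p) = max (w s(p.x, p.y)) (w s(p.y, p.z)) := by
  rw [heavy, apply_ite w, max_comm, max_def]

/-- Core safety lemma: if `p` is a 3-path of class 2, 3 or 4 and `s(a,b)` is a middle edge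
of `p` with covered endpoint `a`, then the matching edge of `a` lies in `M₁ ∪ M₂`. -/
lemma core_safe (hPk : IsPacking P) (hM : IsMatching M) {p : P3 V} (hp : p ∈ P)
    (hcls : cls2 M p ∨ cls3 M p ∨ cls4 M p) {a b : V} (hg : s(a, b) ∈ p.edges)
    (ha : covered M a) (hb : ¬ covered M b) :
    eMatch M a ∈ Mset1 P M ∪ Mset2 P M := by
  obtain ⟨hfM, haf⟩ := eMatch_spec (M := M) ha
  by_cases h1 : eMatch M a ∈ Mset1 P M
  · exact Finset.mem_union_left _ h1
  refine Finset.mem_union_right _ ?_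
  simp only [Mset2, Finset.mem_filter]
  refine ⟨hfM, ⟨s(a, b), ⟨⟨p, hp, hg⟩, a, b, rfl, ha, hb⟩, a, haf, by simp⟩, ?_⟩
  intro g' hg'in hshares
  obtain ⟨⟨q, hq, hg'e⟩, hg'mid⟩ := hg'in
  obtain ⟨a', b', rfl, ha', hb'⟩ := hg'mid
  refine ⟨⟨q, ?_, hg'e⟩, a', b', rfl, ha', hb'⟩
  simp only [P234, psel, Finset.mem_filter]
  refine ⟨hq, ?_⟩
  by_cases hqx : covered M q.x <;> by_cases hqy : covered M q.y <;> by_cases hqz : covered M q.z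
  · -- all covered: contradiction with b'
    exfalso
    have hbq : b' ∈ q.verts := edge_vert hg'e (by simp)
    rw [mem_verts_iff] at hbq
    rcases hbq with h | h | h <;> exact hb' (by rw [h]; assumption)
  · -- cov x, cov y, ¬ cov z : hard case A
    exfalso
    have hk : kcnt M q = 2 := by rw [kcnt_eq]; simp [hqx, hqy, hqz]
    by_cases hyzM : s(q.y, q.z) ∈ M
    · exact hqz ⟨_, hyzM, by simp⟩
    by_cases hxyM : s(q.x, q.y) ∈ M
    · -- g' must be s(q.y, q.z)
      have hab : a' = q.y ∧ b' = q.z := by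
        rcases mem_edges_cases hg'e with h | h
        · rcases Sym2.eq_iff.1 h with ⟨h1, h2⟩ | ⟨h1, h2⟩
          · exact absurd (by rw [h2]; exact hqy : covered M b') hb'
          · exact absurd (by rw [h2]; exact hqx : covered M b') hb'
        · rcases Sym2.eq_iff.1 h with ⟨h1, h2⟩ | ⟨h1, h2⟩
          · exact ⟨h1, h2⟩
          · exact absurd (by rw [← h1]; exact ha' : covered M q.z) hqz
      obtain ⟨rfl, rfl⟩ := hab
      obtain ⟨u, huf, hug⟩ := hshares
      have hu : u = q.y := by
        rcases Sym2.mem_iff.1 hug with h | h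
        · exact h
        · exact absurd (by rw [← h]; exact ⟨_, hfM, huf⟩ : covered M q.z) hqz
      subst hu
      have hfeq : eMatch M a = s(q.x, q.y) := matching_unique hM hfM hxyM huf (by simp)
      have haq : a ∈ q.verts := by
        have h' : a ∈ s(q.x, q.y) := hfeq ▸ haf
        rcases Sym2.mem_iff.1 h' with h | h <;> simp [P3.verts, h]
      have hap : a ∈ p.verts := edge_vert hg (by simp)
      have hpq : p ≠ q := by
        rintro rfl
        rcases hcls with h | h | h
        · have h1' : kcnt M p = 1 := h.1; omega
        · have h1' : kcnt M p = 1 := h.1; omega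
        · exact h.2 hqy
      exact packing_disj hPk hp hq hpq hap haq
    · -- class 6
      have h6 : cls6 M q := ⟨hk, hqy, hxyM, hyzM⟩
      exact h1 (Finset.mem_filter.2 ⟨hfM, s(a', b'),
        ⟨⟨q, mem_psel.2 ⟨hq, h6⟩, hg'e⟩, a', b', rfl, ha', hb'⟩, hshares⟩)
  · -- cov x, ¬ cov y, cov z : class 4
    have hk : kcnt M q = 2 := by rw [kcnt_eq]; simp [hqx, hqy, hqz]
    exact Or.inr (Or.inr ⟨hk, hqy⟩)
  · -- cov x only : class 2
    have hk : kcnt M q = 1 := by rw [kcnt_eq]; simp [hqx, hqy, hqz]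
    exact Or.inl ⟨hk, hqy⟩
  · -- ¬ cov x, cov y, cov z : hard case B
    exfalso
    have hk : kcnt M q = 2 := by rw [kcnt_eq]; simp [hqx, hqy, hqz]
    by_cases hxyM : s(q.x, q.y) ∈ M
    · exact hqx ⟨_, hxyM, by simp⟩
    by_cases hyzM : s(q.y, q.z) ∈ M
    · -- g' must be s(q.x, q.y), with a' = q.y, b' = q.x
      have hab : a' = q.y ∧ b' = q.x := by
        rcases mem_edges_cases hg'e with h | h
        · rcases Sym2.eq_iff.1 h with ⟨h1, h2⟩ | ⟨h1, h2⟩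
          · exact absurd (by rw [← h1]; exact ha' : covered M q.x) hqx
          · exact ⟨h1, h2⟩
        · rcases Sym2.eq_iff.1 h with ⟨h1, h2⟩ | ⟨h1, h2⟩
          · exact absurd (by rw [h2]; exact hqz : covered M b') hb'
          · exact absurd (by rw [h2]; exact hqy : covered M b') hb'
      obtain ⟨rfl, rfl⟩ := hab
      obtain ⟨u, huf, hug⟩ := hshares
      have hu : u = q.y := by
        rcases Sym2.mem_iff.1 hug with h | h
        · exact h
        · exact absurd (by rw [← h]; exact ⟨_, hfM, huf⟩ : covered M q.x) hqx
      subst hu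
      have hfeq : eMatch M a = s(q.y, q.z) := matching_unique hM hfM hyzM huf (by simp)
      have haq : a ∈ q.verts := by
        have h' : a ∈ s(q.y, q.z) := hfeq ▸ haf
        rcases Sym2.mem_iff.1 h' with h | h <;> simp [P3.verts, h]
      have hap : a ∈ p.verts := edge_vert hg (by simp)
      have hpq : p ≠ q := by
        rintro rfl
        rcases hcls with h | h | h
        · have h1' : kcnt M p = 1 := h.1; omega
        · have h1' : kcnt M p = 1 := h.1; omega
        · exact h.2 hqy
      exact packing_disj hPk hp hq hpq hap haq
    · have h6 : cls6 M q := ⟨hk, hqy, hxyM, hyzM⟩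
      exact h1 (Finset.mem_filter.2 ⟨hfM, s(a', b'),
        ⟨⟨q, mem_psel.2 ⟨hq, h6⟩, hg'e⟩, a', b', rfl, ha', hb'⟩, hshares⟩)
  · -- cov y only : class 3
    have hk : kcnt M q = 1 := by rw [kcnt_eq]; simp [hqx, hqy, hqz]
    exact Or.inr (Or.inl ⟨hk, hqy⟩)
  · -- cov z only : class 2
    have hk : kcnt M q = 1 := by rw [kcnt_eq]; simp [hqx, hqy, hqz]
    exact Or.inl ⟨hk, hqy⟩
  · -- none covered: contradiction with a'
    exfalso
    have haq : a' ∈ q.verts := edge_vert hg'e (by simp)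
    rw [mem_verts_iff] at haq
    rcases haq with h | h | h <;> rw [h] at ha' <;> [exact hqx ha'; exact hqy ha'; exact hqz ha']

/-- Every selected edge has an uncovered endpoint, and the matching edge of any covered
endpoint lies in `M₁ ∪ M₂`. -/
lemma sel_safe (w : Sym2 V → ℝ) (hPk : IsPacking P) (hM : IsMatching M) {p : P3 V}
    (hp : p ∈ P) (hc : Ccls M p) :
    (∃ u, u ∈ sel w M p ∧ ¬ covered M u) ∧
      (∀ v, v ∈ sel w M p → covered M v → eMatch M v ∈ Mset1 P M ∪ Mset2 P M) := by
  rcases hc with h | h | h | h | h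
  · -- class 1
    obtain ⟨hx, hy, hz⟩ := uncov_of_kcnt0 h
    refine ⟨⟨p.y, y_mem_sel w M p, hy⟩, ?_⟩
    intro v hv hcv
    exfalso
    have hvv := edge_vert (sel_mem_edges w M p) hv
    rw [mem_verts_iff] at hvv
    rcases hvv with h' | h' | h' <;> subst h' <;> [exact hx hcv; exact hy hcv; exact hz hcv]
  · -- class 2
    have hsel : sel w M p = heavy w p := by
      rw [sel, if_neg]
      intro h6
      have h2' : kcnt M p = 2 := h6.1
      have h1' : kcnt M p = 1 := h.1
      omega
    refine ⟨⟨p.y, y_mem_sel w M p, h.2⟩, ?_⟩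
    intro v hv hcv
    rw [hsel, heavy] at hv
    split_ifs at hv <;> rcases Sym2.mem_iff.1 hv with h' | h' <;> subst h'
    · exact core_safe hPk hM hp (Or.inl h) (by simp [P3.edges]) hcv h.2
    · exact absurd hcv h.2
    · exact absurd hcv h.2
    · exact core_safe hPk hM hp (Or.inl h) (by rw [Sym2.eq_swap]; simp [P3.edges]) hcv h.2
  · -- class 3
    obtain ⟨hx, hz⟩ := cov_of_kcnt1_y h.1 h.2
    have hsel : sel w M p = heavy w p := by
      rw [sel, if_neg]
      intro h6
      have h2' : kcnt M p = 2 := h6.1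
      have h1' : kcnt M p = 1 := h.1
      omega
    constructor
    · rw [hsel, heavy]
      split_ifs
      · exact ⟨p.x, by simp, hx⟩
      · exact ⟨p.z, by simp, hz⟩
    · intro v hv hcv
      rw [hsel, heavy] at hv
      split_ifs at hv <;> rcases Sym2.mem_iff.1 hv with h' | h' <;> subst h'
      · exact absurd hcv hx
      · exact core_safe hPk hM hp (Or.inr (Or.inl h)) (by rw [Sym2.eq_swap]; simp [P3.edges])
          hcv hx
      · exact core_safe hPk hM hp (Or.inr (Or.inl h)) (by simp [P3.edges]) hcv hz
      · exact absurd hcv hz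
  · -- class 4
    have hsel : sel w M p = heavy w p := by
      rw [sel, if_neg]
      intro h6
      exact h.2 h6.2.1
    refine ⟨⟨p.y, y_mem_sel w M p, h.2⟩, ?_⟩
    intro v hv hcv
    rw [hsel, heavy] at hv
    split_ifs at hv <;> rcases Sym2.mem_iff.1 hv with h' | h' <;> subst h'
    · exact core_safe hPk hM hp (Or.inr (Or.inr h)) (by simp [P3.edges]) hcv h.2
    · exact absurd hcv h.2
    · exact absurd hcv h.2
    · exact core_safe hPk hM hp (Or.inr (Or.inr h)) (by rw [Sym2.eq_swap]; simp [P3.edges])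
        hcv h.2
  · -- class 6
    have hsel : sel w M p = if covered M p.x then s(p.y, p.z) else s(p.x, p.y) := by
      rw [sel, if_pos h]
    rcases kcnt2_y h.1 h.2.1 with ⟨hx, hz⟩ | ⟨hx, hz⟩
    · refine ⟨⟨p.z, by rw [hsel, if_pos hx]; simp, hz⟩, ?_⟩
      intro v hv hcv
      rw [hsel, if_pos hx] at hv
      rcases Sym2.mem_iff.1 hv with h' | h' <;> subst h'
      · refine Finset.mem_union_left _ ?_
        simp only [Mset1, Finset.mem_filter]
        exact ⟨(eMatch_spec hcv).1, s(p.y, p.z),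
          ⟨⟨p, mem_psel.2 ⟨hp, h⟩, by simp [P3.edges]⟩, p.y, p.z, rfl, h.2.1, hz⟩,
          p.y, (eMatch_spec hcv).2, by simp⟩
      · exact absurd hcv hz
    · refine ⟨⟨p.x, by rw [hsel, if_neg hx]; simp, hx⟩, ?_⟩
      intro v hv hcv
      rw [hsel, if_neg hx] at hv
      rcases Sym2.mem_iff.1 hv with h' | h' <;> subst h'
      · exact absurd hcv hx
      · refine Finset.mem_union_left _ ?_
        simp only [Mset1, Finset.mem_filter]
        exact ⟨(eMatch_spec hcv).1, s(p.x, p.y),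
          ⟨⟨p, mem_psel.2 ⟨hp, h⟩, by simp [P3.edges]⟩, p.y, p.x, Sym2.eq_swap, h.2.1, hx⟩,
          p.y, (eMatch_spec hcv).2, by simp⟩

lemma out_pair_eq (e : Sym2 V) : s(e.out.1, e.out.2) = e := by
  have := e.out_eq
  simpa [Sym2.mk] using this

lemma mem_out_pair {e : Sym2 V} {v : V} : v ∈ ({e.out.1, e.out.2} : Finset V) ↔ v ∈ e := by
  rw [Finset.mem_insert, Finset.mem_singleton]
  conv_rhs => rw [← out_pair_eq e]
  rw [Sym2.mem_iff]

lemma matching_card_le {A : Finset (Sym2 V)} (hA : IsMatching A) :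
    2 * A.card ≤ Fintype.card V := by
  classical
  have hdisj : ∀ e ∈ A, ∀ f ∈ A, e ≠ f →
      Disjoint ({e.out.1, e.out.2} : Finset V) ({f.out.1, f.out.2} : Finset V) := by
    intro e he f hf hef
    rw [Finset.disjoint_left]
    intro v hv hv'
    exact hA.2 e he f hf hef v (mem_out_pair.1 hv) (mem_out_pair.1 hv')
  have h2 : ∀ e ∈ A, ({e.out.1, e.out.2} : Finset V).card = 2 := by
    intro e he
    refine Finset.card_pair ?_
    intro h
    exact hA.1 e he (by rw [← out_pair_eq e, Sym2.mk_isDiag_iff]; exact h)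
  calc 2 * A.card = ∑ _e ∈ A, 2 := by rw [Finset.sum_const, smul_eq_mul, mul_comm]
    _ = ∑ e ∈ A, ({e.out.1, e.out.2} : Finset V).card := (Finset.sum_congr rfl h2).symm
    _ = (A.biUnion fun e => ({e.out.1, e.out.2} : Finset V)).card :=
        (Finset.card_biUnion hdisj).symm
    _ ≤ Fintype.card V := by
        rw [← Finset.card_univ]
        exact Finset.card_le_card (Finset.subset_univ _)

lemma covered_card_le {A : Finset (Sym2 V)} (hA : IsMatching A) :
    (Finset.univ.filter fun v => covered A v).card ≤ 2 * A.card := by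
  classical
  have hsub : (Finset.univ.filter fun v => covered A v) ⊆
      A.biUnion fun e => ({e.out.1, e.out.2} : Finset V) := by
    intro v hv
    obtain ⟨e, he, hve⟩ := (Finset.mem_filter.1 hv).2
    exact Finset.mem_biUnion.2 ⟨e, he, mem_out_pair.2 hve⟩
  calc (Finset.univ.filter fun v => covered A v).card
      ≤ (A.biUnion fun e => ({e.out.1, e.out.2} : Finset V)).card := Finset.card_le_card hsub
    _ ≤ ∑ e ∈ A, ({e.out.1, e.out.2} : Finset V).card := Finset.card_biUnion_le
    _ ≤ ∑ _e ∈ A, 2 := Finset.sum_le_sum fun e _ =>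
        (Finset.card_insert_le _ _).trans (by simp)
    _ = 2 * A.card := by rw [Finset.sum_const, smul_eq_mul, mul_comm]

lemma extend_matching (w : Sym2 V → ℝ) (hw : ∀ e : Sym2 V, 0 ≤ w e) :
    ∀ (k : ℕ) (A : Finset (Sym2 V)), IsMatching A → A.card + k = Fintype.card V / 2 →
      2 ∣ Fintype.card V →
      ∃ B, IsMatching B ∧ B.card = Fintype.card V / 2 ∧ ew w A ≤ ew w B := by
  intro k
  induction k with
  | zero => exact fun A hA hc _ => ⟨A, hA, by omega, le_rfl⟩
  | succ k ih =>
    intro A hA hc h2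
    have hcc := covered_card_le hA
    have hfc := Finset.card_filter_add_card_filter_not
      (s := (Finset.univ : Finset V)) (p := fun v => covered A v)
    rw [Finset.card_univ] at hfc
    obtain ⟨u, hu, v, hv, huv⟩ := Finset.one_lt_card.1
      (show 1 < (Finset.univ.filter fun v => ¬ covered A v).card by omega)
    have hu' : ¬ covered A u := (Finset.mem_filter.1 hu).2
    have hv' : ¬ covered A v := (Finset.mem_filter.1 hv).2
    have hsA : s(u, v) ∉ A := fun hmem => hu' ⟨_, hmem, by simp⟩
    have hmatch : IsMatching (insert s(u, v) A) := by
      constructor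
      · intro e he
        rcases Finset.mem_insert.1 he with rfl | he
        · rw [Sym2.mk_isDiag_iff]; exact huv
        · exact hA.1 e he
      · intro e he f hf hef x hxe hxf
        rcases Finset.mem_insert.1 he with rfl | heA <;>
          rcases Finset.mem_insert.1 hf with rfl | hfA
        · exact hef rfl
        · rcases Sym2.mem_iff.1 hxe with rfl | rfl
          · exact hu' ⟨f, hfA, hxf⟩
          · exact hv' ⟨f, hfA, hxf⟩
        · rcases Sym2.mem_iff.1 hxf with rfl | rfl
          · exact hu' ⟨e, heA, hxe⟩
          · exact hv' ⟨e, heA, hxe⟩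
        · exact hA.2 e heA f hfA hef x hxe hxf
    have hcard' : (insert s(u, v) A).card + k = Fintype.card V / 2 := by
      rw [Finset.card_insert_of_notMem hsA]; omega
    obtain ⟨B, hB, hBc, hBw⟩ := ih _ hmatch hcard' h2
    refine ⟨B, hB, hBc, le_trans ?_ hBw⟩
    rw [ew, ew, Finset.sum_insert hsA]
    have := hw s(u, v)
    linarith

end Aux8

theorem statement_8 (n : ℕ) (hn : Fintype.card V = n) (h3 : 3 ∣ n) (h2 : 2 ∣ n)
    (w : Sym2 V → ℝ) (hw : ∀ e : Sym2 V, 0 ≤ w e)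
    (M : Finset (Sym2 V)) (hM : IsMaxMatchingOfSize w (n / 3) M)
    (N : Finset (Sym2 V)) (hN : IsMaxMatchingOfSize w (n / 2) N)
    (Pstar : Finset (P3 V)) (hP : IsMaxPacking w Pstar) (hAss : Ass Pstar M) :
    ew w M - ew w (Mset1 Pstar M) - ew w (Mset2 Pstar M) + ew w (X1 w Pstar M) +
      maxSum w (psel Pstar (cls2 M)) + ew w (X3 w Pstar M) + ew w (X4 w Pstar M) +
      ew w (X6 Pstar M) ≤ ew w N := by
  classical
  obtain ⟨hPk, -⟩ := hP
  obtain ⟨hMm, -, -⟩ := hM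
  obtain ⟨hNm, hNc, hNmax⟩ := hN
  have hM1sub : Mset1 Pstar M ⊆ M := Finset.filter_subset _ _
  have hM2sub : Mset2 Pstar M ⊆ M := Finset.filter_subset _ _
  -- M₁ and M₂ are disjoint
  have hd12 : Disjoint (Mset1 Pstar M) (Mset2 Pstar M) := by
    rw [Finset.disjoint_left]
    intro f hf1 hf2
    obtain ⟨hfM, g, ⟨⟨p, hp6, hgp⟩, hgmid⟩, hsh⟩ := Finset.mem_filter.1 hf1
    obtain ⟨hp, hp6'⟩ := mem_psel.1 hp6
    obtain ⟨-, -, hall⟩ := Finset.mem_filter.1 hf2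
    obtain ⟨⟨q, hq234, hgq⟩, -⟩ := hall g ⟨⟨p, hp, hgp⟩, hgmid⟩ hsh
    obtain ⟨hq, hqc⟩ := mem_psel.1 hq234
    have hpq : p ≠ q := by
      rintro rfl
      rcases hqc with h | h | h
      · have h1' : kcnt M p = 1 := h.1
        have h2' : kcnt M p = 2 := hp6'.1
        omega
      · have h1' : kcnt M p = 1 := h.1
        have h2' : kcnt M p = 2 := hp6'.1
        omega
      · exact h.2 hp6'.2.1
    obtain ⟨a3, b3, rfl, -, -⟩ := hgmid
    exact packing_disj hPk hp hq hpq (edge_vert hgp (show a3 ∈ s(a3, b3) by simp))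
      (edge_vert hgq (show a3 ∈ s(a3, b3) by simp))
  have hRsum : ew w M = ew w (M \ (Mset1 Pstar M ∪ Mset2 Pstar M)) +
      (ew w (Mset1 Pstar M) + ew w (Mset2 Pstar M)) := by
    have h1 : ∑ e ∈ M \ (Mset1 Pstar M ∪ Mset2 Pstar M), w e
        + ∑ e ∈ Mset1 Pstar M ∪ Mset2 Pstar M, w e = ∑ e ∈ M, w e :=
      Finset.sum_sdiff (Finset.union_subset hM1sub hM2sub)
    have h2' : ∑ e ∈ Mset1 Pstar M ∪ Mset2 Pstar M, w e
        = ∑ e ∈ Mset1 Pstar M, w e + ∑ e ∈ Mset2 Pstar M, w e := Finset.sum_union hd12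
    simp only [ew]
    linarith
  -- the added edges
  have hSsub : psel Pstar (Ccls M) ⊆ Pstar := Finset.filter_subset _ _
  have hselinj : ∀ p ∈ psel Pstar (Ccls M), ∀ q ∈ psel Pstar (Ccls M),
      sel w M p = sel w M q → p = q := by
    intro p hp q hq h
    by_contra hne
    exact packing_disj hPk (hSsub hp) (hSsub hq) hne
      (edge_vert (sel_mem_edges w M p) (y_mem_sel w M p))
      (edge_vert (sel_mem_edges w M q) (h ▸ y_mem_sel w M p))
  have hAddew : ew w ((psel Pstar (Ccls M)).image (sel w M))
      = ∑ p ∈ psel Pstar (Ccls M), w (sel w M p) := by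
    rw [ew]
    exact Finset.sum_image hselinj
  -- splitting the sum over the five classes
  have hsplit : psel Pstar (Ccls M) =
      (((psel Pstar (cls1 M) ∪ psel Pstar (cls2 M)) ∪ psel Pstar (cls3 M))
        ∪ psel Pstar (cls4 M)) ∪ psel Pstar (cls6 M) := by
    ext p
    simp only [mem_psel, Finset.mem_union, Ccls]
    tauto
  have hd1 : Disjoint (psel Pstar (cls1 M)) (psel Pstar (cls2 M)) := by
    rw [Finset.disjoint_left]
    intro p ha hb
    have a1 : kcnt M p = 0 := (mem_psel.1 ha).2
    have a2 : kcnt M p = 1 := ((mem_psel.1 hb).2).1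
    omega
  have hd2 : Disjoint (psel Pstar (cls1 M) ∪ psel Pstar (cls2 M)) (psel Pstar (cls3 M)) := by
    rw [Finset.disjoint_left]
    intro p ha hb
    have a3 : cls3 M p := (mem_psel.1 hb).2
    rcases Finset.mem_union.1 ha with h | h
    · have a1 : kcnt M p = 0 := (mem_psel.1 h).2
      have a2 : kcnt M p = 1 := a3.1
      omega
    · exact ((mem_psel.1 h).2).2 a3.2
  have hd3 : Disjoint ((psel Pstar (cls1 M) ∪ psel Pstar (cls2 M)) ∪ psel Pstar (cls3 M))
      (psel Pstar (cls4 M)) := by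
    rw [Finset.disjoint_left]
    intro p ha hb
    have a4 : kcnt M p = 2 := ((mem_psel.1 hb).2).1
    rcases Finset.mem_union.1 ha with h | h
    · rcases Finset.mem_union.1 h with h' | h'
      · have a1 : kcnt M p = 0 := (mem_psel.1 h').2
        omega
      · have a2 : kcnt M p = 1 := ((mem_psel.1 h').2).1
        omega
    · have a3 : kcnt M p = 1 := ((mem_psel.1 h).2).1
      omega
  have hd4 : Disjoint (((psel Pstar (cls1 M) ∪ psel Pstar (cls2 M)) ∪ psel Pstar (cls3 M))
      ∪ psel Pstar (cls4 M)) (psel Pstar (cls6 M)) := by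
    rw [Finset.disjoint_left]
    intro p ha hb
    have a6 : cls6 M p := (mem_psel.1 hb).2
    have a6k : kcnt M p = 2 := a6.1
    rcases Finset.mem_union.1 ha with h | h
    · rcases Finset.mem_union.1 h with h' | h'
      · rcases Finset.mem_union.1 h' with h'' | h''
        · have a1 : kcnt M p = 0 := (mem_psel.1 h'').2
          omega
        · have a2 : kcnt M p = 1 := ((mem_psel.1 h'').2).1
          omega
      · have a3 : kcnt M p = 1 := ((mem_psel.1 h').2).1
        omega
    · exact ((mem_psel.1 h).2).2 a6.2.1
  have hsum5 : ∑ p ∈ psel Pstar (Ccls M), w (sel w M p)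
      = ∑ p ∈ psel Pstar (cls1 M), w (sel w M p) + ∑ p ∈ psel Pstar (cls2 M), w (sel w M p)
        + ∑ p ∈ psel Pstar (cls3 M), w (sel w M p) + ∑ p ∈ psel Pstar (cls4 M), w (sel w M p)
        + ∑ p ∈ psel Pstar (cls6 M), w (sel w M p) := by
    rw [hsplit, Finset.sum_union hd4, Finset.sum_union hd3, Finset.sum_union hd2,
      Finset.sum_union hd1]
  -- identify each partial sum
  have hselheavy : ∀ (c : P3 V → Prop), (∀ p, c p → ¬ cls6 M p) →
      ∀ p ∈ psel Pstar c, sel w M p = heavy w p := by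
    intro c hc p hp
    rw [sel, if_neg (hc p (mem_psel.1 hp).2)]
  have hheavyinj : ∀ (c : P3 V → Prop), ∀ p ∈ psel Pstar c, ∀ q ∈ psel Pstar c,
      heavy w p = heavy w q → p = q := by
    intro c p hp q hq h
    by_contra hne
    exact packing_disj hPk (mem_psel.1 hp).1 (mem_psel.1 hq).1 hne
      (edge_vert (heavy_mem_edges w p) (y_mem_heavy w p))
      (edge_vert (heavy_mem_edges w q) (h ▸ y_mem_heavy w p))
  have hn16 : ∀ p : P3 V, cls1 M p → ¬ cls6 M p := by
    intro p h h6
    have a1 : kcnt M p = 0 := h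
    have a2 : kcnt M p = 2 := h6.1
    omega
  have hn26 : ∀ p : P3 V, cls2 M p → ¬ cls6 M p := by
    intro p h h6
    have a1 : kcnt M p = 1 := h.1
    have a2 : kcnt M p = 2 := h6.1
    omega
  have hn36 : ∀ p : P3 V, cls3 M p → ¬ cls6 M p := by
    intro p h h6
    have a1 : kcnt M p = 1 := h.1
    have a2 : kcnt M p = 2 := h6.1
    omega
  have hn46 : ∀ p : P3 V, cls4 M p → ¬ cls6 M p := fun p h h6 => h.2 h6.2.1
  have hX1 : ∑ p ∈ psel Pstar (cls1 M), w (sel w M p) = ew w (X1 w Pstar M) := by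
    rw [Finset.sum_congr rfl fun p hp => by rw [hselheavy _ hn16 p hp]]
    rw [X1, ew]
    exact (Finset.sum_image (hheavyinj _)).symm
  have hX2 : ∑ p ∈ psel Pstar (cls2 M), w (sel w M p) = maxSum w (psel Pstar (cls2 M)) := by
    rw [maxSum]
    refine Finset.sum_congr rfl fun p hp => ?_
    rw [hselheavy _ hn26 p hp]
    exact heavy_w w p
  have hX3 : ∑ p ∈ psel Pstar (cls3 M), w (sel w M p) = ew w (X3 w Pstar M) := by
    rw [Finset.sum_congr rfl fun p hp => by rw [hselheavy _ hn36 p hp]]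
    rw [X3, ew]
    exact (Finset.sum_image (hheavyinj _)).symm
  have hX4 : ∑ p ∈ psel Pstar (cls4 M), w (sel w M p) = ew w (X4 w Pstar M) := by
    rw [Finset.sum_congr rfl fun p hp => by rw [hselheavy _ hn46 p hp]]
    rw [X4, ew]
    exact (Finset.sum_image (hheavyinj _)).symm
  have hX6 : ∑ p ∈ psel Pstar (cls6 M), w (sel w M p) = ew w (X6 Pstar M) := by
    have hss : ∀ p ∈ psel Pstar (cls6 M),
        sel w M p = (if covered M p.x then s(p.y, p.z) else s(p.x, p.y)) := by
      intro p hp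
      rw [sel, if_pos (mem_psel.1 hp).2]
    rw [Finset.sum_congr rfl fun p hp => by rw [hss p hp]]
    rw [X6, ew]
    refine (Finset.sum_image ?_).symm
    intro p hp q hq h
    by_contra hne
    have hy1 : p.y ∈ (if covered M p.x then s(p.y, p.z) else s(p.x, p.y)) := by
      split_ifs <;> simp
    have hm1 : (if covered M p.x then s(p.y, p.z) else s(p.x, p.y)) ∈ p.edges := by
      split_ifs <;> simp [P3.edges]
    have hm2 : (if covered M q.x then s(q.y, q.z) else s(q.x, q.y)) ∈ q.edges := by
      split_ifs <;> simp [P3.edges]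
    exact packing_disj hPk (mem_psel.1 hp).1 (mem_psel.1 hq).1 hne
      (edge_vert hm1 hy1) (edge_vert hm2 (by
        have h' : (if covered M p.x then s(p.y, p.z) else s(p.x, p.y)) =
            (if covered M q.x then s(q.y, q.z) else s(q.x, q.y)) := h
        exact h' ▸ hy1))
  -- safety facts about added edges
  have hsafe : ∀ e ∈ (psel Pstar (Ccls M)).image (sel w M),
      (∃ u, u ∈ e ∧ ¬ covered M u) ∧
        (∀ v, v ∈ e → covered M v → eMatch M v ∈ Mset1 Pstar M ∪ Mset2 Pstar M) := by
    intro e he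
    obtain ⟨p, hpS, rfl⟩ := Finset.mem_image.1 he
    exact sel_safe w hPk hMm (mem_psel.1 hpS).1 (mem_psel.1 hpS).2
  have hDisjRA : Disjoint (M \ (Mset1 Pstar M ∪ Mset2 Pstar M))
      ((psel Pstar (Ccls M)).image (sel w M)) := by
    rw [Finset.disjoint_left]
    intro e heR heA
    obtain ⟨⟨u, hue, hu⟩, -⟩ := hsafe e heA
    exact hu ⟨e, (Finset.mem_sdiff.1 heR).1, hue⟩
  have hNNew : ew w ((M \ (Mset1 Pstar M ∪ Mset2 Pstar M))
        ∪ (psel Pstar (Ccls M)).image (sel w M))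
      = ew w (M \ (Mset1 Pstar M ∪ Mset2 Pstar M))
        + ew w ((psel Pstar (Ccls M)).image (sel w M)) := by
    simp only [ew]
    exact Finset.sum_union hDisjRA
  have hNNmatch : IsMatching ((M \ (Mset1 Pstar M ∪ Mset2 Pstar M))
      ∪ (psel Pstar (Ccls M)).image (sel w M)) := by
    constructor
    · intro e he
      rcases Finset.mem_union.1 he with h | h
      · exact hMm.1 e (Finset.mem_sdiff.1 h).1
      · obtain ⟨p, hpS, rfl⟩ := Finset.mem_image.1 h
        have hnd : ∀ (a b : V), a ≠ b → ¬ (s(a, b)).IsDiag := by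
          intro a b hab hd
          exact hab (Sym2.mk_isDiag_iff.1 hd)
        rw [sel]
        split_ifs
        · exact hnd _ _ p.hyz
        · exact hnd _ _ p.hxy
        · rw [heavy]
          split_ifs
          · exact hnd _ _ p.hxy
          · exact hnd _ _ p.hyz
    · intro e he f hf hef x hxe hxf
      rcases Finset.mem_union.1 he with heR | heA <;> rcases Finset.mem_union.1 hf with hfR | hfA
      · exact hMm.2 e (Finset.mem_sdiff.1 heR).1 f (Finset.mem_sdiff.1 hfR).1 hef x hxe hxf
      · have hcov : covered M x := ⟨e, (Finset.mem_sdiff.1 heR).1, hxe⟩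
        have hmem := (hsafe f hfA).2 x hxf hcov
        rw [eMatch_eq hMm (Finset.mem_sdiff.1 heR).1 hxe] at hmem
        exact (Finset.mem_sdiff.1 heR).2 hmem
      · have hcov : covered M x := ⟨f, (Finset.mem_sdiff.1 hfR).1, hxf⟩
        have hmem := (hsafe e heA).2 x hxe hcov
        rw [eMatch_eq hMm (Finset.mem_sdiff.1 hfR).1 hxf] at hmem
        exact (Finset.mem_sdiff.1 hfR).2 hmem
      · obtain ⟨p, hpS, rfl⟩ := Finset.mem_image.1 heA
        obtain ⟨q, hqS, rfl⟩ := Finset.mem_image.1 hfA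
        have hpq : p ≠ q := fun hh => hef (by rw [hh])
        exact packing_disj hPk (hSsub hpS) (hSsub hqS) hpq
          (edge_vert (sel_mem_edges w M p) hxe) (edge_vert (sel_mem_edges w M q) hxf)
  -- extend to a matching of size n / 2
  have hNNcard : ((M \ (Mset1 Pstar M ∪ Mset2 Pstar M))
      ∪ (psel Pstar (Ccls M)).image (sel w M)).card ≤ Fintype.card V / 2 := by
    have := matching_card_le hNNmatch
    omega
  obtain ⟨B, hBm, hBc, hBw⟩ := extend_matching w hw
    (Fintype.card V / 2 - ((M \ (Mset1 Pstar M ∪ Mset2 Pstar M))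
      ∪ (psel Pstar (Ccls M)).image (sel w M)).card) _ hNNmatch (by omega)
    (by rw [hn]; exact h2)
  have hfin : ew w B ≤ ew w N := hNmax B hBm (by rw [hBc, hn])
  linarith [hRsum, hAddew, hsum5, hX1, hX2, hX3, hX4, hX6, hNNew, hBw, hfin]

end MW3PP
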